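/- Let H be a bounded self-adjoint operator on a Hilbert space, φ a unit eigenvector with Hφ = Eφ, ψ a unit vector, and 𝓔 = ⟨ψ, Hψ⟩. Then |E − 𝓔| ≤ ‖H − E‖ · min_{θ ∈ [0,2π)} ‖φ − e^{iθ}ψ‖². -/

import Mathlib

/-- Eigenvalue error is quadratic in the eigenvector error, up to the optimal phase:
`|E − 𝓔| ≤ ‖H − E‖ · min_θ ‖φ − e^{iθ}ψ‖²`. -/
theorem eigenvalue_error_quadratic {𝓗 : Type*} [NormedAddCommGroup 𝓗]
    [InnerProductSpace ℂ 𝓗] [CompleteSpace 𝓗]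
    (H : 𝓗 →L[ℂ] 𝓗) (hH : IsSelfAdjoint H) (φ ψ : 𝓗)
    (hφ : ‖φ‖ = 1) (hψ : ‖ψ‖ = 1) (E : ℝ) (heig : H φ = (E : ℂ) • φ) :
    ‖(E : ℂ) - (inner ℂ ψ (H ψ) : ℂ)‖
      ≤ ‖H - (E : ℂ) • (ContinuousLinearMap.id ℂ 𝓗)‖
        * ⨅ θ : ℝ, ‖φ - Complex.exp (θ * Complex.I) • ψ‖ ^ 2 := by
  set A : 𝓗 →L[ℂ] 𝓗 := H - (E : ℂ) • (ContinuousLinearMap.id ℂ 𝓗) with hA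
  have hAsa : IsSelfAdjoint A := by
    apply hH.sub
    rw [ContinuousLinearMap.isSelfAdjoint_iff_isSymmetric]
    intro x y
    simp only [ContinuousLinearMap.coe_coe, ContinuousLinearMap.smul_apply,
      ContinuousLinearMap.id_apply, inner_smul_left, inner_smul_right, Complex.conj_ofReal]
  have hAsym := hAsa.isSymmetric
  have hAφ : A φ = 0 := by
    simp [hA, ContinuousLinearMap.sub_apply, heig]
  have hψψ : (inner ℂ ψ ψ : ℂ) = 1 := by
    rw [inner_self_eq_norm_sq_to_K, hψ]; norm_num
  have hEq : (E : ℂ) - (inner ℂ ψ (H ψ) : ℂ) = -(inner ℂ ψ (A ψ) : ℂ) := by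
    simp only [hA, ContinuousLinearMap.sub_apply, ContinuousLinearMap.smul_apply,
      ContinuousLinearMap.id_apply, inner_sub_right, inner_smul_right, hψψ]
    ring
  have key : ∀ θ : ℝ, ‖(E : ℂ) - (inner ℂ ψ (H ψ) : ℂ)‖
      ≤ ‖A‖ * ‖φ - Complex.exp (θ * Complex.I) • ψ‖ ^ 2 := by
    intro θ
    set c : ℂ := Complex.exp (θ * Complex.I) with hc
    have habs : ‖c‖ = 1 := by
      simpa [hc] using Complex.norm_exp_ofReal_mul_I θ
    have hcc : (starRingEnd ℂ) c * c = 1 := by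
      have := Complex.normSq_eq_norm_sq c
      rw [habs] at this
      rw [mul_comm, Complex.mul_conj, this]
      norm_num
    set χ : 𝓗 := φ - c • ψ with hχ
    have h1 : A χ = -(c • A ψ) := by
      simp [hχ, map_sub, hAφ, map_smul]
    have hinner : (inner ℂ χ (A χ) : ℂ) = (inner ℂ ψ (A ψ) : ℂ) := by
      rw [hχ, inner_sub_left, h1]
      have h2 : (inner ℂ φ (-(c • A ψ)) : ℂ) = 0 := by
        have h3 := hAsym φ (-(c • ψ))
        simp only [ContinuousLinearMap.coe_coe] at h3
        rw [show -(c • A ψ) = A (-(c • ψ)) by simp [map_smul], ← h3, hAφ, inner_zero_left]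
      rw [h2, inner_neg_right, inner_smul_left, inner_smul_right, zero_sub, neg_neg,
        ← mul_assoc, hcc, one_mul]
    calc ‖(E : ℂ) - (inner ℂ ψ (H ψ) : ℂ)‖
        = ‖(inner ℂ χ (A χ) : ℂ)‖ := by rw [hEq, hinner]; simp [Complex.norm_def]
      _ ≤ ‖χ‖ * ‖A χ‖ := norm_inner_le_norm χ (A χ)
      _ ≤ ‖χ‖ * (‖A‖ * ‖χ‖) := by
          gcongr; exact A.le_opNorm χ
      _ = ‖A‖ * ‖χ‖ ^ 2 := by ring
  rw [Real.mul_iInf_of_nonneg (norm_nonneg A)]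
  exact le_ciInf key
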